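/- For integers a, b ≥ 0 and α ≥ 0, the polynomial Z(z) = Σ_{i=0}^{min(a,b)} [(-a)_i (-b)_i] / [(-α-a-b)_i i!] · |z|^{2i} (z|η)^{a-i} (z|η)̄^{b-i} on ℂⁿ (with n = α+2 and η a fixed unit vector) is harmonic: Δ Z = 0, where Δ = 4 Σ_{j=1}^n ∂²/∂z_j∂z̄_j. -/
import Mathlib


/-- The Wirtinger derivative ∂/∂z_j on functions of n complex variables. -/
noncomputable def wD {n : ℕ} (j : Fin n) (f : (Fin n → ℂ) → ℂ) : (Fin n → ℂ) → ℂ :=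
  fun z => (1 / 2) * (fderiv ℝ f z (Pi.single j 1) - Complex.I * fderiv ℝ f z (Pi.single j Complex.I))

/-- The Wirtinger derivative ∂/∂z̄_j on functions of n complex variables. -/
noncomputable def wDBar {n : ℕ} (j : Fin n) (f : (Fin n → ℂ) → ℂ) : (Fin n → ℂ) → ℂ :=
  fun z => (1 / 2) * (fderiv ℝ f z (Pi.single j 1) + Complex.I * fderiv ℝ f z (Pi.single j Complex.I))

/-- The Euclidean Laplacian on ℝ^{2n} ≅ ℂⁿ in complex coordinates: Δ = 4 Σ_j ∂²/∂z_j∂z̄_j. -/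
noncomputable def cLap {n : ℕ} (f : (Fin n → ℂ) → ℂ) : (Fin n → ℂ) → ℂ :=
  fun z => 4 * ∑ j : Fin n, wD j (wDBar j f) z


open ComplexConjugate Finset

namespace ZH

variable {n : ℕ}

/-- `f` is `ℝ`-differentiable with Wirtinger derivatives `D j` and `DB j`. -/
def HasW (f : (Fin n → ℂ) → ℂ) (D DB : Fin n → (Fin n → ℂ) → ℂ) : Prop :=
  ∀ z, ∃ L : (Fin n → ℂ) →L[ℝ] ℂ, HasFDerivAt f L z ∧
    ∀ v, L v = ∑ j, (D j z * v j + DB j z * conj (v j))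

theorem hasW_congr {f : (Fin n → ℂ) → ℂ} {D DB D' DB' : Fin n → (Fin n → ℂ) → ℂ}
    (h : HasW f D DB) (hD : ∀ j z, D j z = D' j z) (hDB : ∀ j z, DB j z = DB' j z) :
    HasW f D' DB' := by
  intro z
  obtain ⟨L, h1, h2⟩ := h z
  exact ⟨L, h1, fun v => by rw [h2]; simp only [hD, hDB]⟩

theorem hasW_congr_fun {f f' : (Fin n → ℂ) → ℂ} {D DB : Fin n → (Fin n → ℂ) → ℂ}
    (h : HasW f D DB) (hf : ∀ z, f z = f' z) : HasW f' D DB := by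
  have : f = f' := funext hf
  exact this ▸ h

theorem hasW_const (c : ℂ) : HasW (n := n) (fun _ => c) (fun _ _ => 0) (fun _ _ => 0) :=
  fun z => ⟨0, hasFDerivAt_const c z, by simp⟩

theorem hasW_coord (k : Fin n) :
    HasW (fun z => z k) (fun j _ => if j = k then 1 else 0) (fun _ _ => 0) := by
  intro z
  refine ⟨(ContinuousLinearMap.proj k :
      (Fin n → ℂ) →L[ℂ] ℂ).restrictScalars ℝ, ?_, fun v => ?_⟩
  · exact ((ContinuousLinearMap.proj k : (Fin n → ℂ) →L[ℂ] ℂ).restrictScalars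
      ℝ).hasFDerivAt
  · simp [ite_mul, Finset.sum_ite_eq']

theorem HasW.conj {f : (Fin n → ℂ) → ℂ} {D DB : Fin n → (Fin n → ℂ) → ℂ}
    (h : HasW f D DB) :
    HasW (fun z => conj (f z)) (fun j z => conj (DB j z)) (fun j z => conj (D j z)) := by
  intro z
  obtain ⟨L, h1, h2⟩ := h z
  refine ⟨(Complex.conjCLE : ℂ ≃L[ℝ] ℂ).toContinuousLinearMap.comp L,
    ((Complex.conjCLE : ℂ ≃L[ℝ] ℂ).toContinuousLinearMap.hasFDerivAt).comp z h1, fun v => ?_⟩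
  simp only [ContinuousLinearMap.coe_comp', Function.comp_apply, h2,
    ContinuousLinearEquiv.coe_coe]
  rw [show ((Complex.conjCLE : ℂ ≃L[ℝ] ℂ) : ℂ → ℂ) = (conj : ℂ → ℂ) from rfl]
  rw [map_sum]
  refine Finset.sum_congr rfl fun j _ => ?_
  simp only [map_add, map_mul, Complex.conj_conj]
  ring

theorem HasW.add {f g : (Fin n → ℂ) → ℂ} {Df DBf Dg DBg : Fin n → (Fin n → ℂ) → ℂ}
    (hf : HasW f Df DBf) (hg : HasW g Dg DBg) :
    HasW (fun z => f z + g z) (fun j z => Df j z + Dg j z) (fun j z => DBf j z + DBg j z) := by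
  intro z
  obtain ⟨Lf, h1f, h2f⟩ := hf z
  obtain ⟨Lg, h1g, h2g⟩ := hg z
  refine ⟨Lf + Lg, h1f.add h1g, fun v => ?_⟩
  simp only [ContinuousLinearMap.add_apply, h2f, h2g, ← Finset.sum_add_distrib]
  exact Finset.sum_congr rfl fun j _ => by ring

theorem HasW.mul {f g : (Fin n → ℂ) → ℂ} {Df DBf Dg DBg : Fin n → (Fin n → ℂ) → ℂ}
    (hf : HasW f Df DBf) (hg : HasW g Dg DBg) :
    HasW (fun z => f z * g z) (fun j z => f z * Dg j z + g z * Df j z)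
      (fun j z => f z * DBg j z + g z * DBf j z) := by
  intro z
  obtain ⟨Lf, h1f, h2f⟩ := hf z
  obtain ⟨Lg, h1g, h2g⟩ := hg z
  refine ⟨f z • Lg + g z • Lf, h1f.mul h1g, fun v => ?_⟩
  simp only [ContinuousLinearMap.add_apply, ContinuousLinearMap.smul_apply, smul_eq_mul,
    h2f, h2g, Finset.mul_sum, ← Finset.sum_add_distrib]
  exact Finset.sum_congr rfl fun j _ => by ring

theorem hasW_sum {ι : Type*} (s : Finset ι) (f : ι → (Fin n → ℂ) → ℂ)
    (D DB : ι → Fin n → (Fin n → ℂ) → ℂ)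
    (h : ∀ i ∈ s, HasW (f i) (D i) (DB i)) :
    HasW (fun z => ∑ i ∈ s, f i z) (fun j z => ∑ i ∈ s, D i j z)
      (fun j z => ∑ i ∈ s, DB i j z) := by
  classical
  induction s using Finset.induction with
  | empty => simpa using hasW_const (n := n) 0
  | @insert a s hx ih =>
    simp only [Finset.sum_insert hx]
    exact (h a (mem_insert_self a s)).add (ih fun i hi => h i (mem_insert_of_mem hi))

theorem HasW.pow {f : (Fin n → ℂ) → ℂ} {D DB : Fin n → (Fin n → ℂ) → ℂ}
    (hf : HasW f D DB) (m : ℕ) :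
    HasW (fun z => f z ^ m) (fun j z => (m : ℂ) * f z ^ (m - 1) * D j z)
      (fun j z => (m : ℂ) * f z ^ (m - 1) * DB j z) := by
  induction m with
  | zero =>
    refine hasW_congr (hasW_congr_fun (hasW_const 1) fun z => by simp) ?_ ?_ <;>
      · intro j z; simp
  | succ m ih =>
    have key : ∀ (x d : ℂ), x * ((m : ℂ) * x ^ (m - 1) * d) + x ^ m * d
        = ((m : ℕ) + 1 : ℂ) * x ^ m * d := by
      intro x d
      cases m with
      | zero => simp
      | succ m => push_cast [Nat.succ_sub_one]; ring
    refine hasW_congr (hasW_congr_fun (hf.mul ih) fun z => by rw [← pow_succ']) ?_ ?_ <;>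
      · intro j z
        simp only [Nat.add_sub_cancel]
        rw [key]
        push_cast
        ring

theorem HasW.wD_eq {f : (Fin n → ℂ) → ℂ} {D DB : Fin n → (Fin n → ℂ) → ℂ}
    (h : HasW f D DB) (j : Fin n) (z : Fin n → ℂ) : wD j f z = D j z := by
  obtain ⟨L, h1, h2⟩ := h z
  simp only [wD, h1.fderiv, h2, Pi.single_apply]
  simp only [apply_ite (conj : ℂ → ℂ), map_one, map_zero, mul_ite, mul_one, mul_zero,
    Complex.conj_I, Finset.sum_add_distrib, Finset.sum_ite_eq' Finset.univ j,
    Finset.mem_univ, if_true]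
  linear_combination ((DB j z - D j z) / 2) * Complex.I_mul_I

theorem HasW.wDBar_eq {f : (Fin n → ℂ) → ℂ} {D DB : Fin n → (Fin n → ℂ) → ℂ}
    (h : HasW f D DB) (j : Fin n) (z : Fin n → ℂ) : wDBar j f z = DB j z := by
  obtain ⟨L, h1, h2⟩ := h z
  simp only [wDBar, h1.fderiv, h2, Pi.single_apply]
  simp only [apply_ite (conj : ℂ → ℂ), map_one, map_zero, mul_ite, mul_one, mul_zero,
    Complex.conj_I, Finset.sum_add_distrib, Finset.sum_ite_eq' Finset.univ j,
    Finset.mem_univ, if_true]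
  linear_combination ((D j z - DB j z) / 2) * Complex.I_mul_I

end ZH

namespace ZH

variable {n : ℕ}

noncomputable def Qf : (Fin n → ℂ) → ℂ := fun z => ∑ j, z j * conj (z j)
noncomputable def Pf (η : Fin n → ℂ) : (Fin n → ℂ) → ℂ := fun z => ∑ j, z j * conj (η j)

theorem hasW_Q : HasW (n := n) Qf (fun j z => conj (z j)) (fun j z => z j) := by
  refine hasW_congr (hasW_sum Finset.univ (fun k => fun z => z k * conj (z k)) _ _
    (fun k _ => (hasW_coord k).mul ((hasW_coord k).conj))) ?_ ?_ <;>
    · intro j z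
      simp [apply_ite (conj : ℂ → ℂ), mul_ite, Finset.sum_ite_eq']

theorem hasW_P (η : Fin n → ℂ) :
    HasW (Pf η) (fun j _ => conj (η j)) (fun _ _ => 0) := by
  refine hasW_congr (hasW_sum Finset.univ (fun k => fun z => z k * conj (η k)) _ _
    (fun k _ => (hasW_coord k).mul (hasW_const (conj (η k))))) ?_ ?_ <;>
    · intro j z
      simp [mul_ite, Finset.sum_ite_eq']

theorem hasW_Pb (η : Fin n → ℂ) :
    HasW (fun z => conj (Pf η z)) (fun _ _ => 0) (fun j _ => η j) := by
  refine hasW_congr (hasW_P η).conj ?_ ?_ <;> · intro j z; simp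

theorem hasW_cmono (η : Fin n → ℂ) (c : ℂ) (i s t : ℕ) :
    HasW (fun z => c * Qf z ^ i * Pf η z ^ s * conj (Pf η z) ^ t)
      (fun j z => c * ((i : ℂ) * Qf z ^ (i - 1) * conj (z j) * Pf η z ^ s * conj (Pf η z) ^ t
            + (s : ℂ) * Qf z ^ i * Pf η z ^ (s - 1) * conj (η j) * conj (Pf η z) ^ t))
      (fun j z => c * ((i : ℂ) * Qf z ^ (i - 1) * z j * Pf η z ^ s * conj (Pf η z) ^ t
            + (t : ℂ) * Qf z ^ i * Pf η z ^ s * conj (Pf η z) ^ (t - 1) * η j)) := by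
  refine hasW_congr ((((hasW_const c).mul (hasW_Q.pow i)).mul ((hasW_P η).pow s)).mul
    ((hasW_Pb η).pow t)) ?_ ?_ <;> · intro j z; ring

end ZH
namespace ZH

noncomputable def coef (α a b i : ℕ) : ℝ :=
  ((ascPochhammer ℝ i).eval (-(a : ℝ)) * (ascPochhammer ℝ i).eval (-(b : ℝ))) /
    ((ascPochhammer ℝ i).eval (-(α : ℝ) - a - b) * (i.factorial : ℝ))

theorem poch_ne (α a b i : ℕ) (hi : i ≤ α + a + b) :
    (ascPochhammer ℝ i).eval (-(α : ℝ) - a - b) ≠ 0 := by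
  induction i with
  | zero => simp
  | succ i ih =>
    rw [ascPochhammer_succ_right, Polynomial.eval_mul, Polynomial.eval_add,
      Polynomial.eval_X, Polynomial.eval_natCast]
    refine mul_ne_zero (ih (by omega)) ?_
    have h1 : (i : ℝ) < ((α + a + b : ℕ) : ℝ) := by exact_mod_cast (by omega : i < α + a + b)
    push_cast at h1 ⊢
    intro hcon
    nlinarith

theorem coef_rec (α a b i : ℕ) (hia : i < a) (hib : i < b) :
    coef α a b (i + 1) * (((i + 1) * (α + a + b - i) : ℕ) : ℝ)
      + coef α a b i * (((a - i) * (b - i) : ℕ) : ℝ) = 0 := by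
  have hi1 : i ≤ α + a + b := by omega
  have hD : (ascPochhammer ℝ i).eval (-(α : ℝ) - a - b) ≠ 0 := poch_ne α a b i hi1
  have hx : (-(α : ℝ) - a - b + i) ≠ 0 := by
    have h1 : (i : ℝ) < ((α + a + b : ℕ) : ℝ) := by exact_mod_cast (by omega : i < α + a + b)
    push_cast at h1
    intro hcon; nlinarith
  have hfac : ((i.factorial : ℝ)) ≠ 0 := by exact_mod_cast i.factorial_ne_zero
  unfold coef
  rw [ascPochhammer_succ_right]
  simp only [Polynomial.eval_mul, Polynomial.eval_add, Polynomial.eval_X,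
    Polynomial.eval_natCast, Nat.factorial_succ]
  have hc1 : (((i + 1) * (α + a + b - i) : ℕ) : ℝ) = ((i : ℝ) + 1) * ((α : ℝ) + a + b - i) := by
    push_cast [Nat.cast_sub (by omega : i ≤ α + a + b)]; ring
  have hc2 : (((a - i) * (b - i) : ℕ) : ℝ) = ((a : ℝ) - i) * ((b : ℝ) - i) := by
    push_cast [Nat.cast_sub hia.le, Nat.cast_sub hib.le]; ring
  rw [hc1, hc2]
  push_cast
  field_simp
  ring

theorem key (c Q P Pb : ℂ) (n a b i : ℕ) (hia : i ≤ a) (hib : i ≤ b) :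
    c * (i : ℂ) * ((i - 1 : ℕ) : ℂ) * Q ^ (i - 1 - 1) * P ^ (a - i) * Pb ^ (b - i) * Q
      + c * (i : ℂ) * ((a - i : ℕ) : ℂ) * Q ^ (i - 1) * P ^ (a - i - 1) * Pb ^ (b - i) * P
      + (n : ℂ) * (c * (i : ℂ) * Q ^ (i - 1) * P ^ (a - i) * Pb ^ (b - i))
      + c * ((b - i : ℕ) : ℂ) * (i : ℂ) * Q ^ (i - 1) * P ^ (a - i) * Pb ^ (b - i - 1) * Pb
      + c * ((b - i : ℕ) : ℂ) * ((a - i : ℕ) : ℂ) * Q ^ i * P ^ (a - i - 1) * Pb ^ (b - i - 1)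
    = c * (i : ℂ) * ((n : ℂ) + a + b - 1 - i) * Q ^ (i - 1) * P ^ (a - i) * Pb ^ (b - i)
      + c * ((a - i : ℕ) : ℂ) * ((b - i : ℕ) : ℂ) * Q ^ i * P ^ (a - i - 1) * Pb ^ (b - i - 1) := by
  obtain ⟨s, rfl⟩ := Nat.exists_eq_add_of_le hia
  obtain ⟨t, rfl⟩ := Nat.exists_eq_add_of_le hib
  simp only [Nat.add_sub_cancel_left]
  rcases i with _ | i
  · simp only [Nat.zero_sub, Nat.sub_zero]
    rcases s with _ | s <;> rcases t with _ | t <;> push_cast <;> ring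
  · rcases i with _ | k
    · try rw [show (0 : ℕ) + 1 - 1 = 0 from rfl]
      try rw [show (0 : ℕ) + 1 - 1 - 1 = 0 from rfl]
      rcases s with _ | s <;> rcases t with _ | t <;>
        push_cast [Nat.add_sub_cancel] <;> ring
    · try rw [show k + 1 + 1 - 1 = k + 1 from rfl]
      try rw [show k + 1 + 1 - 1 - 1 = k from rfl]
      rcases s with _ | s <;> rcases t with _ | t <;>
        push_cast [Nat.add_sub_cancel] <;> ring

end ZH
namespace ZH

set_option maxHeartbeats 1000000 in
theorem main (α a b : ℕ) (η : Fin (α + 2) → ℂ)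
    (hη : ∑ j, η j * conj (η j) = 1) (z : Fin (α + 2) → ℂ) :
    cLap (fun z : Fin (α + 2) → ℂ => ∑ i ∈ Finset.range (min a b + 1),
      ((coef α a b i : ℝ) : ℂ) * Qf z ^ i * Pf η z ^ (a - i) * conj (Pf η z) ^ (b - i)) z
      = 0 := by
  set m := min a b with hm
  -- sum identities
  have hS1 : ∀ w : Fin (α + 2) → ℂ, (∑ j, conj (w j) * w j) = Qf w := by
    intro w; exact Finset.sum_congr rfl fun j _ => mul_comm _ _
  have hS2 : (∑ j, conj (η j) * z j) = Pf η z :=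
    Finset.sum_congr rfl fun j _ => mul_comm _ _
  have hS3 : (∑ j, conj (z j) * η j) = conj (Pf η z) := by
    simp only [Pf, map_sum, map_mul, Complex.conj_conj]
  have hS4 : (∑ j, conj (η j) * η j) = 1 := by
    rw [← hη]; exact Finset.sum_congr rfl fun j _ => mul_comm _ _
  -- first Wirtinger derivative of the zonal sum
  have hZ : HasW (fun z : Fin (α + 2) → ℂ => ∑ i ∈ Finset.range (m + 1),
      ((coef α a b i : ℝ) : ℂ) * Qf z ^ i * Pf η z ^ (a - i) * conj (Pf η z) ^ (b - i))
      (fun j z => ∑ i ∈ Finset.range (m + 1), ((coef α a b i : ℝ) : ℂ) *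
        ((i : ℂ) * Qf z ^ (i - 1) * conj (z j) * Pf η z ^ (a - i) * conj (Pf η z) ^ (b - i)
          + ((a - i : ℕ) : ℂ) * Qf z ^ i * Pf η z ^ (a - i - 1) * conj (η j) *
            conj (Pf η z) ^ (b - i)))
      (fun j z => ∑ i ∈ Finset.range (m + 1), ((coef α a b i : ℝ) : ℂ) *
        ((i : ℂ) * Qf z ^ (i - 1) * z j * Pf η z ^ (a - i) * conj (Pf η z) ^ (b - i)
          + ((b - i : ℕ) : ℂ) * Qf z ^ i * Pf η z ^ (a - i) * conj (Pf η z) ^ (b - i - 1) *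
            η j)) :=
    hasW_sum _ _ _ _ (fun i _ => hasW_cmono η (((coef α a b i : ℝ) : ℂ)) i (a - i) (b - i))
  have hZb : ∀ j : Fin (α + 2),
      wDBar j (fun z : Fin (α + 2) → ℂ => ∑ i ∈ Finset.range (m + 1),
        ((coef α a b i : ℝ) : ℂ) * Qf z ^ i * Pf η z ^ (a - i) * conj (Pf η z) ^ (b - i))
      = fun w => ∑ i ∈ Finset.range (m + 1),
        ((coef α a b i : ℝ) : ℂ) *
          ((i : ℂ) * Qf w ^ (i - 1) * w j * Pf η w ^ (a - i) * conj (Pf η w) ^ (b - i)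
            + ((b - i : ℕ) : ℂ) * Qf w ^ i * Pf η w ^ (a - i) * conj (Pf η w) ^ (b - i - 1) *
              η j) :=
    fun j => funext fun w => hZ.wDBar_eq j w
  -- second Wirtinger derivative
  have hwd : ∀ j : Fin (α + 2),
      wD j (fun w => ∑ i ∈ Finset.range (m + 1),
        ((coef α a b i : ℝ) : ℂ) *
          ((i : ℂ) * Qf w ^ (i - 1) * w j * Pf η w ^ (a - i) * conj (Pf η w) ^ (b - i)
            + ((b - i : ℕ) : ℂ) * Qf w ^ i * Pf η w ^ (a - i) * conj (Pf η w) ^ (b - i - 1) *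
              η j)) z
      = ∑ i ∈ Finset.range (m + 1),
        (((coef α a b i : ℝ) : ℂ) * (i : ℂ) * ((i - 1 : ℕ) : ℂ) * Qf z ^ (i - 1 - 1) *
            Pf η z ^ (a - i) * conj (Pf η z) ^ (b - i) * (conj (z j) * z j)
          + ((coef α a b i : ℝ) : ℂ) * (i : ℂ) * ((a - i : ℕ) : ℂ) * Qf z ^ (i - 1) *
            Pf η z ^ (a - i - 1) * conj (Pf η z) ^ (b - i) * (conj (η j) * z j)
          + ((coef α a b i : ℝ) : ℂ) * (i : ℂ) * Qf z ^ (i - 1) * Pf η z ^ (a - i) *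
            conj (Pf η z) ^ (b - i)
          + ((coef α a b i : ℝ) : ℂ) * ((b - i : ℕ) : ℂ) * (i : ℂ) * Qf z ^ (i - 1) *
            Pf η z ^ (a - i) * conj (Pf η z) ^ (b - i - 1) * (conj (z j) * η j)
          + ((coef α a b i : ℝ) : ℂ) * ((b - i : ℕ) : ℂ) * ((a - i : ℕ) : ℂ) * Qf z ^ i *
            Pf η z ^ (a - i - 1) * conj (Pf η z) ^ (b - i - 1) * (conj (η j) * η j)) := by
    intro j
    have hbig := hasW_sum (Finset.range (m + 1)) _ _ _
      (fun i (_ : i ∈ Finset.range (m + 1)) =>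
        (hasW_const (((coef α a b i : ℝ) : ℂ))).mul
          ((((((hasW_const ((i : ℂ))).mul (hasW_Q.pow (i - 1))).mul (hasW_coord j)).mul
              ((hasW_P η).pow (a - i))).mul ((hasW_Pb η).pow (b - i))).add
            (((((hasW_const (((b - i : ℕ) : ℂ))).mul (hasW_Q.pow i)).mul
              ((hasW_P η).pow (a - i))).mul ((hasW_Pb η).pow (b - i - 1))).mul
              (hasW_const (η j)))))
    refine Eq.trans (hbig.wD_eq j z) ?_
    refine Finset.sum_congr rfl fun i _ => ?_
    simp only [eq_self_iff_true, if_true]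
    ring
  -- put it together
  simp only [cLap]
  have hrw : ∀ j : Fin (α + 2),
      wD j (wDBar j (fun z : Fin (α + 2) → ℂ => ∑ i ∈ Finset.range (m + 1),
        ((coef α a b i : ℝ) : ℂ) * Qf z ^ i * Pf η z ^ (a - i) * conj (Pf η z) ^ (b - i))) z
      = ∑ i ∈ Finset.range (m + 1),
        (((coef α a b i : ℝ) : ℂ) * (i : ℂ) * ((i - 1 : ℕ) : ℂ) * Qf z ^ (i - 1 - 1) *
            Pf η z ^ (a - i) * conj (Pf η z) ^ (b - i) * (conj (z j) * z j)
          + ((coef α a b i : ℝ) : ℂ) * (i : ℂ) * ((a - i : ℕ) : ℂ) * Qf z ^ (i - 1) *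
            Pf η z ^ (a - i - 1) * conj (Pf η z) ^ (b - i) * (conj (η j) * z j)
          + ((coef α a b i : ℝ) : ℂ) * (i : ℂ) * Qf z ^ (i - 1) * Pf η z ^ (a - i) *
            conj (Pf η z) ^ (b - i)
          + ((coef α a b i : ℝ) : ℂ) * ((b - i : ℕ) : ℂ) * (i : ℂ) * Qf z ^ (i - 1) *
            Pf η z ^ (a - i) * conj (Pf η z) ^ (b - i - 1) * (conj (z j) * η j)
          + ((coef α a b i : ℝ) : ℂ) * ((b - i : ℕ) : ℂ) * ((a - i : ℕ) : ℂ) * Qf z ^ i *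
            Pf η z ^ (a - i - 1) * conj (Pf η z) ^ (b - i - 1) * (conj (η j) * η j)) := by
    intro j
    rw [hZb j]
    exact hwd j
  rw [Finset.sum_congr rfl fun j _ => hrw j]
  rw [Finset.sum_comm]
  -- collapse the inner sums over j
  have hcol : ∀ i ∈ Finset.range (m + 1),
      (∑ j, (((coef α a b i : ℝ) : ℂ) * (i : ℂ) * ((i - 1 : ℕ) : ℂ) * Qf z ^ (i - 1 - 1) *
            Pf η z ^ (a - i) * conj (Pf η z) ^ (b - i) * (conj (z j) * z j)
          + ((coef α a b i : ℝ) : ℂ) * (i : ℂ) * ((a - i : ℕ) : ℂ) * Qf z ^ (i - 1) *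
            Pf η z ^ (a - i - 1) * conj (Pf η z) ^ (b - i) * (conj (η j) * z j)
          + ((coef α a b i : ℝ) : ℂ) * (i : ℂ) * Qf z ^ (i - 1) * Pf η z ^ (a - i) *
            conj (Pf η z) ^ (b - i)
          + ((coef α a b i : ℝ) : ℂ) * ((b - i : ℕ) : ℂ) * (i : ℂ) * Qf z ^ (i - 1) *
            Pf η z ^ (a - i) * conj (Pf η z) ^ (b - i - 1) * (conj (z j) * η j)
          + ((coef α a b i : ℝ) : ℂ) * ((b - i : ℕ) : ℂ) * ((a - i : ℕ) : ℂ) * Qf z ^ i *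
            Pf η z ^ (a - i - 1) * conj (Pf η z) ^ (b - i - 1) * (conj (η j) * η j)))
      = ((coef α a b i : ℝ) : ℂ) * (i : ℂ) * (((α + 2 : ℕ) : ℂ) + a + b - 1 - i) *
          Qf z ^ (i - 1) * Pf η z ^ (a - i) * conj (Pf η z) ^ (b - i)
        + ((coef α a b i : ℝ) : ℂ) * ((a - i : ℕ) : ℂ) * ((b - i : ℕ) : ℂ) * Qf z ^ i *
          Pf η z ^ (a - i - 1) * conj (Pf η z) ^ (b - i - 1) := by
    intro i hi
    have hia : i ≤ a := by have := Finset.mem_range.mp hi; omega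
    have hib : i ≤ b := by have := Finset.mem_range.mp hi; omega
    simp only [Finset.sum_add_distrib, ← Finset.mul_sum, Finset.sum_const,
      Finset.card_univ, Fintype.card_fin, nsmul_eq_mul]
    rw [hS1 z, hS2, hS3, hS4, mul_one]
    linear_combination key (((coef α a b i : ℝ) : ℂ)) (Qf z) (Pf η z) (conj (Pf η z))
      (α + 2) a b i hia hib
  rw [Finset.sum_congr rfl hcol]
  -- telescoping
  have htel : ∀ i ∈ Finset.range m,
      ((coef α a b (i + 1) : ℝ) : ℂ) * ((i + 1 : ℕ) : ℂ) *
          (((α + 2 : ℕ) : ℂ) + a + b - 1 - (i + 1 : ℕ)) *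
          Qf z ^ (i + 1 - 1) * Pf η z ^ (a - (i + 1)) * conj (Pf η z) ^ (b - (i + 1))
        + ((coef α a b i : ℝ) : ℂ) * ((a - i : ℕ) : ℂ) * ((b - i : ℕ) : ℂ) * Qf z ^ i *
          Pf η z ^ (a - i - 1) * conj (Pf η z) ^ (b - i - 1) = 0 := by
    intro i hi
    have him : i < m := Finset.mem_range.mp hi
    have hia : i < a := by omega
    have hib : i < b := by omega
    have h2 : ((coef α a b (i + 1) : ℝ) : ℂ) * (((i : ℂ) + 1) * ((α : ℂ) + a + b - i))
        + ((coef α a b i : ℝ) : ℂ) * (((a : ℂ) - i) * ((b : ℂ) - i)) = 0 := by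
      have h1 := coef_rec α a b i hia hib
      have h1c := congrArg (fun r : ℝ => (r : ℂ)) h1
      push_cast [Nat.cast_sub (show i ≤ α + a + b by omega), Nat.cast_sub hia.le,
        Nat.cast_sub hib.le] at h1c
      linear_combination h1c
    rw [Nat.add_sub_cancel, ← Nat.sub_sub a i 1, ← Nat.sub_sub b i 1]
    push_cast [Nat.cast_sub (show i ≤ a by omega), Nat.cast_sub (show i ≤ b by omega),
      Nat.cast_sub (show i + 1 ≤ a by omega), Nat.cast_sub (show i + 1 ≤ b by omega)]
    linear_combination (Qf z ^ i * Pf η z ^ (a - i - 1) * conj (Pf η z) ^ (b - i - 1)) * h2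
  -- the telescoping sum vanishes
  rw [Finset.sum_add_distrib]
  rw [Finset.sum_range_succ']
  rw [Finset.sum_range_succ]
  have hB0 : ((a - m : ℕ) : ℂ) * ((b - m : ℕ) : ℂ) = 0 := by
    rcases (show a - m = 0 ∨ b - m = 0 by omega) with h | h <;> rw [h] <;> simp
  rw [show (((coef α a b 0 : ℝ) : ℂ) * ((0 : ℕ) : ℂ) *
      (((α + 2 : ℕ) : ℂ) + a + b - 1 - (0 : ℕ)) *
      Qf z ^ (0 - 1) * Pf η z ^ (a - 0) * conj (Pf η z) ^ (b - 0)) = 0 by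
    simp]
  rw [show (((coef α a b m : ℝ) : ℂ) * ((a - m : ℕ) : ℂ) * ((b - m : ℕ) : ℂ) * Qf z ^ m *
      Pf η z ^ (a - m - 1) * conj (Pf η z) ^ (b - m - 1)) = 0 by
    rcases (show a - m = 0 ∨ b - m = 0 by omega) with h | h <;> rw [h] <;> simp]
  rw [add_zero, add_zero, ← Finset.sum_add_distrib, Finset.sum_eq_zero htel, mul_zero]

end ZH

/-- The solid zonal harmonic of bidegree (a,b) with pole η on ℂⁿ, n = α+2, is harmonic. -/
theorem zonal_polynomial_harmonic (α a b : ℕ) (η : Fin (α + 2) → ℂ)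
    (hη : ∑ j, η j * (starRingEnd ℂ) (η j) = 1) (z : Fin (α + 2) → ℂ) :
    cLap (fun z : Fin (α + 2) → ℂ =>
      ∑ i ∈ Finset.range (min a b + 1),
        ((((ascPochhammer ℝ i).eval (-(a : ℝ)) * (ascPochhammer ℝ i).eval (-(b : ℝ))) /
            ((ascPochhammer ℝ i).eval (-(α : ℝ) - a - b) * (i.factorial : ℝ)) : ℝ) : ℂ) *
          (∑ j, z j * (starRingEnd ℂ) (z j)) ^ i *
          (∑ j, z j * (starRingEnd ℂ) (η j)) ^ (a - i) *
          ((starRingEnd ℂ) (∑ j, z j * (starRingEnd ℂ) (η j))) ^ (b - i)) z = 0 := ZH.main α a b η hη z
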